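/- (Deterministic core of Theorem 3.1.) Let N ≥ 1 and 1 ≤ ℓ < n, and let X be an order-N real tensor with all modes of size n. For each j = 1, …, N, let Q_j : Matrix (Fin n) (Fin ℓ) ℝ have orthonormal columns (Q_jᵀ Q_j = I_ℓ), let P_j : Matrix (Fin n) (Fin ℓ) ℝ be a selection matrix with P_jᵀ Q_j invertible, and set Π_j = Q_j (P_jᵀ Q_j)⁻¹ P_jᵀ. Suppose g ≥ 1 satisfies ‖(P_jᵀ Q_j)⁻¹‖₂ ≤ g for all j. Then ‖X − X ×₁ Π₁ ×₂ Π₂ ⋯ ×_N Π_N‖_F ≤ ∑_{j=1}^{N} g^j · ‖(I − Q_j Q_jᵀ) · X₍j₎‖_F, where X₍j₎ denotes the mode-j unfolding of X. -/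

import Mathlib

open Matrix Finset

/-- The mode-`j` product of an order-`N` tensor with all modes of size `n`
with a square matrix `A`: `(X ×_j A)(i) = ∑ k, A (i j) k * X (i[j ↦ k])`. -/
def mprod {N n : ℕ} (X : (Fin N → Fin n) → ℝ) (j : Fin N)
    (A : Matrix (Fin n) (Fin n) ℝ) : (Fin N → Fin n) → ℝ :=
  fun i => ∑ k : Fin n, A (i j) k * X (Function.update i j k)

/-- `prodUpTo X Pr j = X ×₁ Pr 1 ×₂ Pr 2 ⋯ ×_j Pr j`, the successive mode products
along the first `j` modes. -/
def prodUpTo {N n : ℕ} (X : (Fin N → Fin n) → ℝ)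
    (Pr : Fin N → Matrix (Fin n) (Fin n) ℝ) : ℕ → ((Fin N → Fin n) → ℝ)
  | 0 => X
  | j + 1 =>
    if h : j < N then mprod (prodUpTo X Pr j) ⟨j, h⟩ (Pr ⟨j, h⟩)
    else prodUpTo X Pr j

/-- The Frobenius norm of an order-`N` tensor with all modes of size `n`. -/
noncomputable def frobT {N n : ℕ} (X : (Fin N → Fin n) → ℝ) : ℝ :=
  Real.sqrt (∑ i, X i ^ 2)

/-- The mode-`j` unfolding of a tensor with all modes of size `n`. -/
def unfold {N n : ℕ} (X : (Fin N → Fin n) → ℝ) (j : Fin N) :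
    Matrix (Fin n) ({k : Fin N // k ≠ j} → Fin n) ℝ :=
  fun a c => X (fun l => if h : l = j then a else c ⟨l, h⟩)

/-- The Frobenius norm of a matrix. -/
noncomputable def frobM {m n : Type*} [Fintype m] [Fintype n] (A : Matrix m n ℝ) : ℝ :=
  Real.sqrt (∑ i, ∑ j, A i j ^ 2)

/-- The spectral norm of a matrix: the operator norm of the induced linear map
from `ℓ²` to `ℓ²`, i.e. the largest singular value. -/
noncomputable def matSpectralNorm {m n : ℕ} (A : Matrix (Fin m) (Fin n) ℝ) : ℝ :=
  ‖LinearMap.toContinuousLinearMap (Matrix.toEuclideanLin A)‖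

/-- `P` is a selection matrix: its columns are distinct columns of the identity matrix. -/
def IsSelectionMatrix {n ℓ : ℕ} (P : Matrix (Fin n) (Fin ℓ) ℝ) : Prop :=
  ∃ p : Fin ℓ → Fin n, Function.Injective p ∧
    ∀ i a, P i a = if i = p a then 1 else 0

noncomputable def sqn {ι : Type*} [Fintype ι] (v : ι → ℝ) : ℝ := ∑ i, v i ^ 2

lemma sqn_nonneg {ι : Type*} [Fintype ι] (v : ι → ℝ) : 0 ≤ sqn v :=
  Finset.sum_nonneg fun _ _ => sq_nonneg _

lemma sqn_eq_dot {ι : Type*} [Fintype ι] (v : ι → ℝ) : sqn v = v ⬝ᵥ v := by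
  simp [sqn, dotProduct, sq]

lemma dot_sq_le {ι : Type*} [Fintype ι] (v w : ι → ℝ) : (v ⬝ᵥ w) ^ 2 ≤ sqn v * sqn w := by
  simpa [dotProduct, sqn] using Finset.sum_mul_sq_le_sq_mul_sq Finset.univ v w

lemma dot_mulVec_left {m k : Type*} [Fintype m] [Fintype k]
    (A : Matrix m k ℝ) (x : k → ℝ) (y : m → ℝ) :
    (A *ᵥ x) ⬝ᵥ y = x ⬝ᵥ (Aᵀ *ᵥ y) := by
  rw [Matrix.mulVec_transpose, dotProduct_comm, Matrix.dotProduct_mulVec, dotProduct_comm]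

lemma sqn_mulVec_orth {m l : Type*} [Fintype m] [Fintype l] [DecidableEq l]
    (Q : Matrix m l ℝ) (hQ : Qᵀ * Q = 1) (u : l → ℝ) : sqn (Q *ᵥ u) = sqn u := by
  rw [sqn_eq_dot, dot_mulVec_left, Matrix.mulVec_mulVec, hQ, Matrix.one_mulVec, sqn_eq_dot]

lemma spec_apply_le {m k : ℕ} (A : Matrix (Fin m) (Fin k) ℝ) (g : ℝ) (hg0 : 0 ≤ g)
    (hA : matSpectralNorm A ≤ g) (v : Fin k → ℝ) :
    sqn (A *ᵥ v) ≤ g ^ 2 * sqn v := by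
  have hnorm : ∀ {p : ℕ} (u : Fin p → ℝ),
      ‖(WithLp.equiv 2 (Fin p → ℝ)).symm u‖ ^ 2 = sqn u := by
    intro p u
    rw [EuclideanSpace.norm_eq, Real.sq_sqrt (by positivity)]
    simp [sqn, Real.norm_eq_abs, sq_abs]
  have h2 := (LinearMap.toContinuousLinearMap (Matrix.toEuclideanLin A)).le_opNorm
      ((WithLp.equiv 2 (Fin k → ℝ)).symm v)
  rw [LinearMap.coe_toContinuousLinearMap'] at h2
  replace h2 : ‖(WithLp.equiv 2 (Fin m → ℝ)).symm (A *ᵥ v)‖ ≤ _ := h2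
  have h3 : ‖(WithLp.equiv 2 (Fin m → ℝ)).symm (A *ᵥ v)‖ ≤
      g * ‖(WithLp.equiv 2 (Fin k → ℝ)).symm v‖ := by
    refine h2.trans ?_
    exact mul_le_mul_of_nonneg_right hA (norm_nonneg _)
  have h4 := mul_self_le_mul_self (norm_nonneg _) h3
  calc sqn (A *ᵥ v) = ‖(WithLp.equiv 2 (Fin m → ℝ)).symm (A *ᵥ v)‖ ^ 2 := (hnorm _).symm
    _ ≤ (g * ‖(WithLp.equiv 2 (Fin k → ℝ)).symm v‖) ^ 2 := by
        rw [sq, sq]; exact h4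
    _ = g ^ 2 * sqn v := by rw [mul_pow, hnorm]

lemma spec_transpose_apply_le {m k : ℕ} (A : Matrix (Fin m) (Fin k) ℝ) (g : ℝ) (hg0 : 0 ≤ g)
    (hA : matSpectralNorm A ≤ g) (u : Fin m → ℝ) :
    sqn (Aᵀ *ᵥ u) ≤ g ^ 2 * sqn u := by
  set t := sqn (Aᵀ *ᵥ u) with ht
  have htn : 0 ≤ t := sqn_nonneg _
  have h1 : t = (A *ᵥ (Aᵀ *ᵥ u)) ⬝ᵥ u := by
    rw [ht, sqn_eq_dot, ← dot_mulVec_left, dotProduct_comm]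
  have h2 : t ^ 2 ≤ sqn (A *ᵥ (Aᵀ *ᵥ u)) * sqn u := by rw [h1]; exact dot_sq_le _ _
  have h3 : sqn (A *ᵥ (Aᵀ *ᵥ u)) ≤ g ^ 2 * t := spec_apply_le A g hg0 hA _
  have h4 : t ^ 2 ≤ g ^ 2 * t * sqn u := by
    calc t ^ 2 ≤ sqn (A *ᵥ (Aᵀ *ᵥ u)) * sqn u := h2
      _ ≤ g ^ 2 * t * sqn u := mul_le_mul_of_nonneg_right h3 (sqn_nonneg _)
  rcases eq_or_lt_of_le htn with h | h
  · rw [← h]; exact mul_nonneg (sq_nonneg g) (sqn_nonneg u)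
  · nlinarith [sqn_nonneg u]

section Selection

variable {n ℓ : ℕ} {P : Matrix (Fin n) (Fin ℓ) ℝ}

lemma sel_transpose_mulVec {p : Fin ℓ → Fin n} (hp : ∀ i a, P i a = if i = p a then 1 else 0)
    (v : Fin n → ℝ) (a : Fin ℓ) : (Pᵀ *ᵥ v) a = v (p a) := by
  simp [Matrix.mulVec, dotProduct, Matrix.transpose_apply, hp, ite_mul]

lemma sel_sqn_le (hP : IsSelectionMatrix P) (v : Fin n → ℝ) : sqn (Pᵀ *ᵥ v) ≤ sqn v := by
  obtain ⟨p, hpinj, hp⟩ := hP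
  have : sqn (Pᵀ *ᵥ v) = ∑ a, v (p a) ^ 2 := by
    simp [sqn, sel_transpose_mulVec hp]
  rw [this, sqn]
  have himg : ∑ a : Fin ℓ, v (p a) ^ 2 = ∑ i ∈ Finset.univ.image p, v i ^ 2 :=
    (Finset.sum_image (f := fun i => v i ^ 2) (fun a _ b _ h => hpinj h)).symm
  rw [himg]
  exact Finset.sum_le_sum_of_subset_of_nonneg (Finset.subset_univ _)
    (fun _ _ _ => sq_nonneg _)

lemma sel_transpose_mul_self (hP : IsSelectionMatrix P) : Pᵀ * P = 1 := by
  obtain ⟨p, hpinj, hp⟩ := hP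
  ext a b
  simp only [Matrix.mul_apply, Matrix.transpose_apply, hp, ite_mul, one_mul, zero_mul,
    Finset.sum_ite_eq', Finset.mem_univ, if_true]
  simp [Matrix.one_apply, hpinj.eq_iff]

end Selection

section Core
variable {n ℓ : ℕ} (Q P : Matrix (Fin n) (Fin ℓ) ℝ)

/-- Lemma B: columnwise bound for the oblique projector itself. -/
lemma proj_col_bound (hQ : Qᵀ * Q = 1) (hP : IsSelectionMatrix P)
    (g : ℝ) (hg1 : 1 ≤ g) (hg : matSpectralNorm ((Pᵀ * Q)⁻¹) ≤ g) (v : Fin n → ℝ) :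
    sqn ((Q * (Pᵀ * Q)⁻¹ * Pᵀ) *ᵥ v) ≤ g ^ 2 * sqn v := by
  have hg0 : (0:ℝ) ≤ g := le_trans zero_le_one hg1
  have h1 : (Q * (Pᵀ * Q)⁻¹ * Pᵀ) *ᵥ v = Q *ᵥ ((Pᵀ * Q)⁻¹ *ᵥ (Pᵀ *ᵥ v)) := by
    rw [Matrix.mulVec_mulVec, Matrix.mulVec_mulVec]
  rw [h1, sqn_mulVec_orth Q hQ]
  calc sqn ((Pᵀ * Q)⁻¹ *ᵥ (Pᵀ *ᵥ v)) ≤ g ^ 2 * sqn (Pᵀ *ᵥ v) :=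
        spec_apply_le _ g hg0 hg _
    _ ≤ g ^ 2 * sqn v := mul_le_mul_of_nonneg_left (sel_sqn_le hP v) (by positivity)

/-- L0: the core Pythagorean bound for `w` orthogonal to the range of `Q`. -/
lemma core_orth_bound (hQ : Qᵀ * Q = 1) (hP : IsSelectionMatrix P)
    (hinv : Invertible (Pᵀ * Q))
    (g : ℝ) (hg1 : 1 ≤ g) (hg : matSpectralNorm ((Pᵀ * Q)⁻¹) ≤ g)
    (w : Fin n → ℝ) (hQtw : Qᵀ *ᵥ w = 0) :
    sqn (w - (Q * (Pᵀ * Q)⁻¹ * Pᵀ) *ᵥ w) ≤ g ^ 2 * sqn w := by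
  have hg0 : (0:ℝ) ≤ g := le_trans zero_le_one hg1
  set G := (Pᵀ * Q)⁻¹ with hG
  have hPtP : Pᵀ * P = 1 := sel_transpose_mul_self hP
  have hGPQ : G * (Pᵀ * Q) = 1 := Matrix.inv_mul_of_invertible _
  have hQPGt : Qᵀ * P * Gᵀ = 1 := by
    rw [show Qᵀ * P = (Pᵀ * Q)ᵀ by rw [Matrix.transpose_mul, Matrix.transpose_transpose],
      ← Matrix.transpose_mul, hGPQ, Matrix.transpose_one]
  obtain ⟨u, hu⟩ : ∃ u, u = G *ᵥ (Pᵀ *ᵥ w) := ⟨_, rfl⟩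
  have hQu : (Q * G * Pᵀ) *ᵥ w = Q *ᵥ u := by
    rw [hu, Matrix.mulVec_mulVec, Matrix.mulVec_mulVec]
  have hwQu : w ⬝ᵥ (Q *ᵥ u) = 0 := by
    rw [dotProduct_comm, dot_mulVec_left, hQtw]
    simp
  have hQuQu : (Q *ᵥ u) ⬝ᵥ (Q *ᵥ u) = sqn u := by rw [← sqn_eq_dot, sqn_mulVec_orth Q hQ]
  have hpyth : sqn (w - Q *ᵥ u) = sqn w + sqn u := by
    rw [sqn_eq_dot, sub_dotProduct, dotProduct_sub, dotProduct_sub, hwQu,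
      dotProduct_comm (Q *ᵥ u) w, hwQu, hQuQu, ← sqn_eq_dot]
    ring
  -- key bound : sqn u ≤ (g^2 - 1) * sqn w
  have hkey : sqn u ≤ (g ^ 2 - 1) * sqn w := by
    obtain ⟨y, hy⟩ : ∃ y, y = P *ᵥ (Gᵀ *ᵥ u) := ⟨_, rfl⟩
    have hQty : Qᵀ *ᵥ y = u := by
      rw [hy, Matrix.mulVec_mulVec, Matrix.mulVec_mulVec, hQPGt, Matrix.one_mulVec]
    have hsqny : sqn y = sqn (Gᵀ *ᵥ u) := by rw [hy, sqn_mulVec_orth P hPtP]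
    have hsqnGt : sqn (Gᵀ *ᵥ u) ≤ g ^ 2 * sqn u := spec_transpose_apply_le G g hg0 hg u
    have hyw : y ⬝ᵥ w = sqn u := by
      rw [hy, dot_mulVec_left, dot_mulVec_left, Matrix.transpose_transpose, ← hu, hu,
        ← sqn_eq_dot, ← hu]
    have hyQu : y ⬝ᵥ (Q *ᵥ u) = sqn u := by
      rw [Matrix.dotProduct_mulVec, ← Matrix.mulVec_transpose, hQty, ← sqn_eq_dot]
    have h5 : sqn (y - Q *ᵥ u) = sqn y - sqn u := by
      rw [sqn_eq_dot, sub_dotProduct, dotProduct_sub, dotProduct_sub, hyQu, hQuQu,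
        dotProduct_comm (Q *ᵥ u) y, hyQu, ← sqn_eq_dot]
      ring
    have h6 : (y - Q *ᵥ u) ⬝ᵥ w = sqn u := by
      have hz : (Q *ᵥ u) ⬝ᵥ w = 0 := by rw [dotProduct_comm]; exact hwQu
      rw [sub_dotProduct, hz, hyw, sub_zero]
    have h7 : (sqn u) ^ 2 ≤ (g ^ 2 * sqn u - sqn u) * sqn w := by
      calc (sqn u) ^ 2 = ((y - Q *ᵥ u) ⬝ᵥ w) ^ 2 := by rw [h6]
        _ ≤ sqn (y - Q *ᵥ u) * sqn w := dot_sq_le _ _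
        _ = (sqn y - sqn u) * sqn w := by rw [h5]
        _ ≤ (g ^ 2 * sqn u - sqn u) * sqn w := by
            refine mul_le_mul_of_nonneg_right ?_ (sqn_nonneg _)
            have := hsqny ▸ hsqnGt
            linarith
    rcases eq_or_lt_of_le (sqn_nonneg u) with h | h
    · rw [← h]
      have h1g : (0:ℝ) ≤ g ^ 2 - 1 := by nlinarith
      exact mul_nonneg h1g (sqn_nonneg w)
    · nlinarith [sqn_nonneg w]
  rw [← hQu] at hpyth
  rw [hpyth]
  linarith [sqn_nonneg w]

/-- Lemma A: columnwise bound for the complementary projector. -/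
lemma resid_col_bound (hQ : Qᵀ * Q = 1) (hP : IsSelectionMatrix P)
    (hinv : Invertible (Pᵀ * Q))
    (g : ℝ) (hg1 : 1 ≤ g) (hg : matSpectralNorm ((Pᵀ * Q)⁻¹) ≤ g) (v : Fin n → ℝ) :
    sqn ((1 - Q * (Pᵀ * Q)⁻¹ * Pᵀ) *ᵥ v) ≤ g ^ 2 * sqn ((1 - Q * Qᵀ) *ᵥ v) := by
  set G := (Pᵀ * Q)⁻¹ with hG
  have hGPQ : G * (Pᵀ * Q) = 1 := Matrix.inv_mul_of_invertible _
  have hQtw : Qᵀ *ᵥ ((1 - Q * Qᵀ) *ᵥ v) = 0 := by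
    rw [Matrix.mulVec_mulVec, Matrix.mul_sub, Matrix.mul_one, ← Matrix.mul_assoc, hQ,
      Matrix.one_mul, sub_self, Matrix.zero_mulVec]
  have hmat : (1 - Q * G * Pᵀ) * (1 - Q * Qᵀ) = 1 - Q * G * Pᵀ := by
    have h2 : Q * G * Pᵀ * (Q * Qᵀ) = Q * Qᵀ := by
      rw [Matrix.mul_assoc (Q * G) _ _, ← Matrix.mul_assoc Pᵀ Q Qᵀ,
        Matrix.mul_assoc Q G _, ← Matrix.mul_assoc G _ _, hGPQ, Matrix.one_mul]
    rw [Matrix.sub_mul, Matrix.one_mul, Matrix.mul_sub, Matrix.mul_one, h2]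
    abel
  have hred : (1 - Q * G * Pᵀ) *ᵥ v = ((1 - Q * Qᵀ) *ᵥ v) - (Q * G * Pᵀ) *ᵥ ((1 - Q * Qᵀ) *ᵥ v) := by
    conv_lhs => rw [← hmat, ← Matrix.mulVec_mulVec, Matrix.sub_mulVec, Matrix.one_mulVec]
  rw [hred]
  exact core_orth_bound Q P hQ hP hinv g hg1 hg _ hQtw

end Core

section Tensor
variable {N n : ℕ}

lemma frobT_nonneg (X : (Fin N → Fin n) → ℝ) : 0 ≤ frobT X := Real.sqrt_nonneg _

lemma frobT_eq_norm (X : (Fin N → Fin n) → ℝ) :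
    frobT X = ‖(WithLp.equiv 2 ((Fin N → Fin n) → ℝ)).symm X‖ := by
  rw [frobT, EuclideanSpace.norm_eq]
  congr 1
  simp [Real.norm_eq_abs, sq_abs]

lemma frobT_add_le (X Y : (Fin N → Fin n) → ℝ) : frobT (X + Y) ≤ frobT X + frobT Y := by
  rw [frobT_eq_norm, frobT_eq_norm, frobT_eq_norm]
  exact norm_add_le _ _

lemma frobT_eq_frobM_unfold (X : (Fin N → Fin n) → ℝ) (j : Fin N) :
    frobT X = frobM (unfold X j) := by
  rw [frobT, frobM]
  congr 1
  rw [← Fintype.sum_prod_type']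
  apply Fintype.sum_equiv (Equiv.funSplitAt j (Fin n))
  intro i
  have : unfold X j (i j) (fun k => i k.1) = X i := by
    unfold unfold
    congr 1
    funext l
    by_cases h : l = j
    · subst h; simp
    · simp [h]
  simp only [Equiv.funSplitAt_apply]
  rw [this]

lemma unfold_mprod (Y : (Fin N → Fin n) → ℝ) (j : Fin N) (A : Matrix (Fin n) (Fin n) ℝ) :
    unfold (mprod Y j A) j = A * unfold Y j := by
  ext a c
  simp only [unfold, mprod, Matrix.mul_apply]
  refine Finset.sum_congr rfl fun k _ => ?_
  have hupd : Function.update (fun l => if h : l = j then a else c ⟨l, h⟩) j k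
      = fun l => if h : l = j then k else c ⟨l, h⟩ := by
    funext l
    by_cases h : l = j
    · subst h; simp
    · simp [Function.update_of_ne h, h]
  rw [hupd]
  simp

lemma mprod_one (Y : (Fin N → Fin n) → ℝ) (j : Fin N) : mprod Y j 1 = Y := by
  funext i
  simp only [mprod, Matrix.one_apply, ite_mul, one_mul, zero_mul]
  rw [Finset.sum_ite_eq, if_pos (Finset.mem_univ _), Function.update_eq_self]

lemma mprod_sub (Y : (Fin N → Fin n) → ℝ) (j : Fin N) (A B : Matrix (Fin n) (Fin n) ℝ) :
    mprod Y j (A - B) = mprod Y j A - mprod Y j B := by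
  funext i
  simp [mprod, Matrix.sub_apply, sub_mul, Finset.sum_sub_distrib]

lemma mprod_comm (X : (Fin N → Fin n) → ℝ) {j k : Fin N} (hjk : j ≠ k)
    (A B : Matrix (Fin n) (Fin n) ℝ) :
    mprod (mprod X j A) k B = mprod (mprod X k B) j A := by
  funext i
  simp only [mprod]
  simp_rw [Finset.mul_sum]
  rw [Finset.sum_comm]
  refine Finset.sum_congr rfl fun l _ => Finset.sum_congr rfl fun m _ => ?_
  rw [Function.update_of_ne hjk, Function.update_of_ne hjk.symm,
    Function.update_comm hjk.symm]
  ring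

/-- column bound transfers to Frobenius norm comparison. -/
lemma frobM_mul_le_of_col {κ : Type*} [Fintype κ] (A B : Matrix (Fin n) (Fin n) ℝ)
    (M : Matrix (Fin n) κ ℝ) (c : ℝ) (hc : 0 ≤ c)
    (h : ∀ v, sqn (A *ᵥ v) ≤ c ^ 2 * sqn (B *ᵥ v)) :
    frobM (A * M) ≤ c * frobM (B * M) := by
  have hcol : ∀ (C : Matrix (Fin n) (Fin n) ℝ),
      ∑ i, ∑ cc, (C * M) i cc ^ 2 = ∑ cc, sqn (C *ᵥ (fun k => M k cc)) := by
    intro C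
    rw [Finset.sum_comm]
    refine Finset.sum_congr rfl fun cc _ => Finset.sum_congr rfl fun i _ => ?_
    simp [Matrix.mul_apply, Matrix.mulVec, dotProduct]
  rw [frobM, frobM, hcol, hcol]
  have hsum : ∑ cc, sqn (A *ᵥ (fun k => M k cc)) ≤
      c ^ 2 * ∑ cc, sqn (B *ᵥ (fun k => M k cc)) := by
    rw [Finset.mul_sum]
    exact Finset.sum_le_sum fun cc _ => h _
  calc Real.sqrt (∑ cc, sqn (A *ᵥ fun k => M k cc))
      ≤ Real.sqrt (c ^ 2 * ∑ cc, sqn (B *ᵥ fun k => M k cc)) := Real.sqrt_le_sqrt hsum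
    _ = c * Real.sqrt (∑ cc, sqn (B *ᵥ fun k => M k cc)) := by
        rw [Real.sqrt_mul (sq_nonneg c), Real.sqrt_sq hc]

lemma frobT_mprod_le_of_col (Y : (Fin N → Fin n) → ℝ) (j : Fin N)
    (A : Matrix (Fin n) (Fin n) ℝ) (c : ℝ) (hc : 0 ≤ c)
    (h : ∀ v, sqn (A *ᵥ v) ≤ c ^ 2 * sqn v) :
    frobT (mprod Y j A) ≤ c * frobT Y := by
  rw [frobT_eq_frobM_unfold (mprod Y j A) j, unfold_mprod, frobT_eq_frobM_unfold Y j]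
  have h1 : ∀ v, sqn (A *ᵥ v) ≤ c ^ 2 * sqn ((1 : Matrix (Fin n) (Fin n) ℝ) *ᵥ v) := by
    intro v; rw [Matrix.one_mulVec]; exact h v
  have := frobM_mul_le_of_col A 1 (unfold Y j) c hc h1
  rwa [Matrix.one_mul] at this

end Tensor

section Main
variable {N n : ℕ}

lemma prodUpTo_mprod_comm (Z : (Fin N → Fin n) → ℝ) (Pr : Fin N → Matrix (Fin n) (Fin n) ℝ)
    (j : Fin N) (R : Matrix (Fin n) (Fin n) ℝ) :
    ∀ m, m ≤ j.val → prodUpTo (mprod Z j R) Pr m = mprod (prodUpTo Z Pr m) j R := by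
  intro m
  induction m with
  | zero => intro _; rfl
  | succ m ih =>
    intro hm
    have hmN : m < N := lt_trans (Nat.lt_of_succ_le hm) j.isLt
    have hne : (⟨m, hmN⟩ : Fin N) ≠ j := Fin.ne_of_val_ne (by simp only [Fin.val_mk]; omega)
    rw [prodUpTo, prodUpTo, dif_pos hmN, dif_pos hmN, ih (Nat.le_of_succ_le hm),
      mprod_comm _ hne.symm]

lemma prodUpTo_growth (Z : (Fin N → Fin n) → ℝ) (Pr : Fin N → Matrix (Fin n) (Fin n) ℝ)
    (g : ℝ) (hg1 : 1 ≤ g)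
    (hcol : ∀ (k : Fin N) (v : Fin n → ℝ), sqn (Pr k *ᵥ v) ≤ g ^ 2 * sqn v) :
    ∀ m, frobT (prodUpTo Z Pr m) ≤ g ^ m * frobT Z := by
  intro m
  have hg0 : (0:ℝ) ≤ g := le_trans zero_le_one hg1
  induction m with
  | zero => simp [prodUpTo]
  | succ m ih =>
    rw [prodUpTo]
    split_ifs with h
    · calc frobT (mprod (prodUpTo Z Pr m) ⟨m, h⟩ (Pr ⟨m, h⟩))
          ≤ g * frobT (prodUpTo Z Pr m) :=
            frobT_mprod_le_of_col _ _ _ g hg0 (hcol ⟨m, h⟩)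
        _ ≤ g * (g ^ m * frobT Z) := mul_le_mul_of_nonneg_left ih hg0
        _ = g ^ (m + 1) * frobT Z := by ring
    · refine ih.trans ?_
      have : g ^ m ≤ g ^ (m + 1) := pow_le_pow_right₀ hg1 (Nat.le_succ m)
      exact mul_le_mul_of_nonneg_right this (frobT_nonneg Z)

end Main

/-- Deterministic core of Theorem 3.1: with `Π_j = Q_j (P_jᵀ Q_j)⁻¹ P_jᵀ` and
`‖(P_jᵀ Q_j)⁻¹‖₂ ≤ g`, the error of the interpolatory Tucker approximation satisfies
`‖X − X ×₁ Π₁ ⋯ ×_N Π_N‖_F ≤ ∑_{j=1}^N g^j ‖(I − Q_j Q_jᵀ) X₍j₎‖_F`. -/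
theorem tucker_interpolatory_error_bound {N n ℓ : ℕ}
    (hN : 1 ≤ N) (hℓ : 1 ≤ ℓ) (hℓn : ℓ < n)
    (X : (Fin N → Fin n) → ℝ)
    (Q P : Fin N → Matrix (Fin n) (Fin ℓ) ℝ)
    (hQ : ∀ j, (Q j)ᵀ * Q j = (1 : Matrix (Fin ℓ) (Fin ℓ) ℝ))
    (hP : ∀ j, IsSelectionMatrix (P j))
    (hinv : ∀ j, Invertible ((P j)ᵀ * Q j))
    (g : ℝ) (hg1 : 1 ≤ g)
    (hg : ∀ j, matSpectralNorm (((P j)ᵀ * Q j)⁻¹) ≤ g) :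
    frobT (X - prodUpTo X (fun j => Q j * ((P j)ᵀ * Q j)⁻¹ * (P j)ᵀ) N) ≤
      ∑ j : Fin N, g ^ ((j : ℕ) + 1) *
        frobM (((1 : Matrix (Fin n) (Fin n) ℝ) - Q j * (Q j)ᵀ) * unfold X j) := by
  classical
  set Pr : Fin N → Matrix (Fin n) (Fin n) ℝ :=
    fun j => Q j * ((P j)ᵀ * Q j)⁻¹ * (P j)ᵀ with hPr
  set R : Fin N → Matrix (Fin n) (Fin n) ℝ := fun j => 1 - Q j * (Q j)ᵀ with hR
  have hg0 : (0:ℝ) ≤ g := le_trans zero_le_one hg1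
  have hcolB : ∀ (k : Fin N) (v : Fin n → ℝ), sqn (Pr k *ᵥ v) ≤ g ^ 2 * sqn v := fun k v =>
    proj_col_bound (Q k) (P k) (hQ k) (hP k) g hg1 (hg k) v
  have hcolA : ∀ (k : Fin N) (v : Fin n → ℝ),
      sqn ((1 - Pr k) *ᵥ v) ≤ g ^ 2 * sqn (R k *ᵥ v) := fun k v =>
    resid_col_bound (Q k) (P k) (hQ k) (hP k) (hinv k) g hg1 (hg k) v
  have hstep : ∀ (m : ℕ) (h : m < N),
      frobT (prodUpTo X Pr m - prodUpTo X Pr (m+1)) ≤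
        g ^ (m+1) * frobM (R ⟨m, h⟩ * unfold X ⟨m, h⟩) := by
    intro m h
    have h1 : prodUpTo X Pr (m+1) = mprod (prodUpTo X Pr m) ⟨m, h⟩ (Pr ⟨m, h⟩) := by
      rw [prodUpTo, dif_pos h]
    have h2 : prodUpTo X Pr m - prodUpTo X Pr (m+1)
        = mprod (prodUpTo X Pr m) ⟨m, h⟩ (1 - Pr ⟨m, h⟩) := by
      rw [h1, mprod_sub, mprod_one]
    rw [h2]
    calc frobT (mprod (prodUpTo X Pr m) ⟨m, h⟩ (1 - Pr ⟨m, h⟩))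
        = frobM ((1 - Pr ⟨m, h⟩) * unfold (prodUpTo X Pr m) ⟨m, h⟩) := by
          rw [frobT_eq_frobM_unfold _ (⟨m, h⟩ : Fin N), unfold_mprod]
      _ ≤ g * frobM (R ⟨m, h⟩ * unfold (prodUpTo X Pr m) ⟨m, h⟩) :=
          frobM_mul_le_of_col _ _ _ g hg0 (hcolA ⟨m, h⟩)
      _ = g * frobT (mprod (prodUpTo X Pr m) ⟨m, h⟩ (R ⟨m, h⟩)) := by
          rw [frobT_eq_frobM_unfold _ (⟨m, h⟩ : Fin N), unfold_mprod]
      _ = g * frobT (prodUpTo (mprod X ⟨m, h⟩ (R ⟨m, h⟩)) Pr m) := by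
          rw [prodUpTo_mprod_comm X Pr ⟨m, h⟩ (R ⟨m, h⟩) m (le_refl m)]
      _ ≤ g * (g ^ m * frobT (mprod X ⟨m, h⟩ (R ⟨m, h⟩))) :=
          mul_le_mul_of_nonneg_left (prodUpTo_growth _ Pr g hg1 hcolB m) hg0
      _ = g ^ (m+1) * frobT (mprod X ⟨m, h⟩ (R ⟨m, h⟩)) := by ring
      _ = g ^ (m+1) * frobM (R ⟨m, h⟩ * unfold X ⟨m, h⟩) := by
          rw [frobT_eq_frobM_unfold _ (⟨m, h⟩ : Fin N), unfold_mprod]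
  set F : ℕ → ℝ :=
    fun t => if h : t < N then g ^ (t+1) * frobM (R ⟨t, h⟩ * unfold X ⟨t, h⟩) else 0 with hF
  have key : ∀ m, frobT (X - prodUpTo X Pr m) ≤ ∑ t ∈ Finset.range m, F t := by
    intro m
    induction m with
    | zero =>
      simp only [Finset.range_zero, Finset.sum_empty]
      have : X - prodUpTo X Pr 0 = 0 := by
        show X - X = 0; rw [sub_self]
      rw [this]
      simp [frobT]
    | succ m ih =>
      have hsplit : X - prodUpTo X Pr (m+1) =
          (X - prodUpTo X Pr m) + (prodUpTo X Pr m - prodUpTo X Pr (m+1)) :=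
        (sub_add_sub_cancel _ _ _).symm
      rw [hsplit, Finset.sum_range_succ]
      refine (frobT_add_le _ _).trans (add_le_add ih ?_)
      by_cases h : m < N
      · rw [show F m = g ^ (m+1) * frobM (R ⟨m, h⟩ * unfold X ⟨m, h⟩) from dif_pos h]
        exact hstep m h
      · rw [show F m = 0 from dif_neg h]
        have heq : prodUpTo X Pr (m+1) = prodUpTo X Pr m := by rw [prodUpTo, dif_neg h]
        rw [heq, sub_self]
        simp [frobT]
  have final := key N
  have hsum : ∑ t ∈ Finset.range N, F t =
      ∑ j : Fin N, g ^ ((j : ℕ) + 1) *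
        frobM (((1 : Matrix (Fin n) (Fin n) ℝ) - Q j * (Q j)ᵀ) * unfold X j) := by
    rw [← Fin.sum_univ_eq_sum_range F N]
    refine Finset.sum_congr rfl fun j _ => ?_
    rw [show F (j : ℕ) = g ^ ((j:ℕ)+1) * frobM (R ⟨(j:ℕ), j.isLt⟩ * unfold X ⟨(j:ℕ), j.isLt⟩)
      from dif_pos j.isLt]
  rw [hsum] at final
  exact final
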